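/- Let c > 0 and r ∈ ℝ be fixed, and for real d define F(d,c) = (1 − d/2) + √((1 − d/2)² + c) and G(d,c) = −d + √(d² + 2c). Then the ratio of the two greedy merge-time proposals, (F(d,c)/2 − r/2) / (G(d,c)/2 − r/2), tends to 1 as d → ∞. (Lemma 1, part 1: Δ_{k,C}/Δ^{prev}_{k,C} → 1 as the data dimension d → ∞.) -/

import Mathlib

open Real Filter

/-- The corrected greedy merge-time proposal numerator. -/
noncomputable def F (d c : ℝ) : ℝ := (1 - d / 2) + Real.sqrt ((1 - d / 2) ^ 2 + c)

/-- The greedy merge-time proposal of Teh et al. -/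
noncomputable def G (d c : ℝ) : ℝ := -d + Real.sqrt (d ^ 2 + 2 * c)

lemma G_pos (d c : ℝ) (hc : 0 < c) : 0 < G d c := by
  have h1 : Real.sqrt (d ^ 2) < Real.sqrt (d ^ 2 + 2 * c) :=
    Real.sqrt_lt_sqrt (by positivity) (by linarith)
  have h2 : d ≤ Real.sqrt (d ^ 2) := by
    rw [Real.sqrt_sq_eq_abs]; exact le_abs_self d
  unfold G; linarith

lemma F_pos (d c : ℝ) (hc : 0 < c) : 0 < F d c := by
  have h1 : Real.sqrt ((1 - d / 2) ^ 2) < Real.sqrt ((1 - d / 2) ^ 2 + c) :=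
    Real.sqrt_lt_sqrt (by positivity) (by linarith)
  have h2 : -(1 - d / 2) ≤ Real.sqrt ((1 - d / 2) ^ 2) := by
    rw [Real.sqrt_sq_eq_abs]; exact neg_le_abs _
  unfold F; linarith

lemma G_mul_eq (d c : ℝ) (hc : 0 < c) (hd : 0 < d) :
    G d c * d = 2 * c / (Real.sqrt (1 + 2 * c / d ^ 2) + 1) := by
  set s := Real.sqrt (1 + 2 * c / d ^ 2) with hs
  have hsnn : 0 ≤ s := Real.sqrt_nonneg _
  have hsq : s ^ 2 = 1 + 2 * c / d ^ 2 := Real.sq_sqrt (by positivity)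
  have key : d ^ 2 * s ^ 2 = d ^ 2 + 2 * c := by
    rw [hsq]; field_simp
  have hrw : Real.sqrt (d ^ 2 + 2 * c) = d * s := by
    rw [hs, ← Real.sqrt_sq hd.le, ← Real.sqrt_mul (by positivity)]
    congr 1
    field_simp
    simp only [Real.sqrt_sq hd.le]
  unfold G
  rw [hrw]
  have hpos : 0 < s + 1 := by linarith
  field_simp
  nlinarith [key]

lemma F_mul_eq (d c : ℝ) (hc : 0 < c) (hd : 0 < d) :
    F d c * d = c / (Real.sqrt ((1 / d - 1 / 2) ^ 2 + c / d ^ 2) - 1 / d + 1 / 2) := by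
  set a : ℝ := 1 - d / 2 with ha
  set t := Real.sqrt ((1 / d - 1 / 2) ^ 2 + c / d ^ 2) with ht
  have htnn : 0 ≤ t := Real.sqrt_nonneg _
  have htsq : t ^ 2 = (1 / d - 1 / 2) ^ 2 + c / d ^ 2 := Real.sq_sqrt (by positivity)
  have key : d ^ 2 * t ^ 2 = a ^ 2 + c := by
    rw [htsq]; field_simp [ha]; ring
  have hrw : Real.sqrt (a ^ 2 + c) = d * t := by
    rw [ht, ← Real.sqrt_sq hd.le, ← Real.sqrt_mul (by positivity)]
    congr 1
    field_simp [ha]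
    simp only [Real.sqrt_sq hd.le]
    ring
  have hgt : a < d * t := by
    have h1 : Real.sqrt (a ^ 2) < Real.sqrt (a ^ 2 + c) :=
      Real.sqrt_lt_sqrt (by positivity) (by linarith)
    have h2 : a ≤ Real.sqrt (a ^ 2) := by
      rw [Real.sqrt_sq_eq_abs]; exact le_abs_self a
    rw [← hrw]; linarith
  have hden : t - 1 / d + 1 / 2 = (d * t - a) / d := by
    field_simp [ha]; ring
  unfold F
  rw [← ha, hrw, hden]
  have hne : d * t - a ≠ 0 := by linarith
  rw [div_div_eq_mul_div, eq_div_iff hne]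
  nlinarith [key]

lemma G_mul_tendsto (c : ℝ) (hc : 0 < c) :
    Tendsto (fun d : ℝ => G d c * d) atTop (nhds c) := by
  have hd2 : Tendsto (fun d : ℝ => d ^ 2) atTop atTop := tendsto_pow_atTop two_ne_zero
  have hcd2 : Tendsto (fun d : ℝ => 2 * c / d ^ 2) atTop (nhds 0) :=
    tendsto_const_nhds.div_atTop hd2
  have hsum : Tendsto (fun d : ℝ => 1 + 2 * c / d ^ 2) atTop (nhds 1) := by
    simpa using tendsto_const_nhds.add hcd2
  have hsq : Tendsto (fun d : ℝ => Real.sqrt (1 + 2 * c / d ^ 2)) atTop (nhds 1) := by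
    have := (Real.continuous_sqrt.tendsto 1).comp hsum
    simpa [Function.comp_def] using this
  have hmain : Tendsto (fun d : ℝ => 2 * c / (Real.sqrt (1 + 2 * c / d ^ 2) + 1))
      atTop (nhds c) := by
    have h := Tendsto.div (tendsto_const_nhds (x := 2 * c))
      (hsq.add (tendsto_const_nhds (x := (1:ℝ)))) (by norm_num)
    simp only [Pi.div_def] at h
    convert h using 2
    ring
  refine hmain.congr' ?_
  filter_upwards [eventually_gt_atTop 0] with d hd
  exact (G_mul_eq d c hc hd).symm

lemma F_mul_tendsto (c : ℝ) (hc : 0 < c) :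
    Tendsto (fun d : ℝ => F d c * d) atTop (nhds c) := by
  have hd2 : Tendsto (fun d : ℝ => d ^ 2) atTop atTop := tendsto_pow_atTop two_ne_zero
  have hcd2 : Tendsto (fun d : ℝ => c / d ^ 2) atTop (nhds 0) :=
    tendsto_const_nhds.div_atTop hd2
  have hinv : Tendsto (fun d : ℝ => 1 / d) atTop (nhds 0) := by
    simpa using tendsto_inv_atTop_zero (𝕜 := ℝ)
  have hsum : Tendsto (fun d : ℝ => (1 / d - 1 / 2) ^ 2 + c / d ^ 2) atTop
      (nhds ((1 / 4 : ℝ))) := by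
    have h1 : Tendsto (fun d : ℝ => (1 / d - 1 / 2) ^ 2) atTop (nhds ((0 - 1 / 2) ^ 2)) :=
      (hinv.sub tendsto_const_nhds).pow 2
    have := h1.add hcd2
    norm_num at this ⊢
    exact this
  have hsq : Tendsto (fun d : ℝ => Real.sqrt ((1 / d - 1 / 2) ^ 2 + c / d ^ 2)) atTop
      (nhds (1 / 2)) := by
    have := (Real.continuous_sqrt.tendsto (1 / 4)).comp hsum
    simp only [Function.comp_def] at this
    convert this using 2
    rw [show (1 / 4 : ℝ) = (1 / 2 : ℝ) ^ 2 by norm_num, Real.sqrt_sq (by norm_num)]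
  have hden : Tendsto (fun d : ℝ => Real.sqrt ((1 / d - 1 / 2) ^ 2 + c / d ^ 2) - 1 / d + 1 / 2)
      atTop (nhds 1) := by
    have h := (hsq.sub hinv).add (tendsto_const_nhds (x := (1 / 2 : ℝ)))
    norm_num at h
    simpa [one_div] using h
  have hmain : Tendsto
      (fun d : ℝ => c / (Real.sqrt ((1 / d - 1 / 2) ^ 2 + c / d ^ 2) - 1 / d + 1 / 2))
      atTop (nhds c) := by
    have h := Tendsto.div (tendsto_const_nhds (x := c)) hden one_ne_zero
    simpa [Pi.div_def] using h
  refine hmain.congr' ?_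
  filter_upwards [eventually_gt_atTop 0] with d hd
  exact (F_mul_eq d c hc hd).symm

/-- Lemma 1, part 1: the ratio of the two greedy merge-time proposals tends to 1
as the data dimension `d → ∞`. -/
theorem ratio_tendsto_one (c r : ℝ) (hc : 0 < c) :
    Tendsto (fun d : ℝ => (F d c / 2 - r / 2) / (G d c / 2 - r / 2)) atTop (nhds 1) := by
  have hF := F_mul_tendsto c hc
  have hG := G_mul_tendsto c hc
  rcases eq_or_ne r 0 with hr | hr
  · subst hr
    have hmain : Tendsto (fun d : ℝ => (F d c * d) / (G d c * d)) atTop (nhds 1) := by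
      have := hF.div hG hc.ne'
      simpa [div_self hc.ne', Pi.div_def] using this
    refine hmain.congr' ?_
    filter_upwards [eventually_gt_atTop 0] with d hd
    have hGpos := G_pos d c hc
    rw [mul_div_mul_right _ _ hd.ne']
    have hGne : G d c ≠ 0 := hGpos.ne'
    field_simp
    ring
  · have hinv : Tendsto (fun d : ℝ => 1 / d) atTop (nhds 0) := by
      simpa using tendsto_inv_atTop_zero (𝕜 := ℝ)
    have hF0 : Tendsto (fun d : ℝ => F d c) atTop (nhds 0) := by
      have := hF.mul hinv
      rw [mul_zero] at this
      refine this.congr' ?_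
      filter_upwards [eventually_gt_atTop 0] with d hd
      field_simp
    have hG0 : Tendsto (fun d : ℝ => G d c) atTop (nhds 0) := by
      have := hG.mul hinv
      rw [mul_zero] at this
      refine this.congr' ?_
      filter_upwards [eventually_gt_atTop 0] with d hd
      field_simp
    have hden : (0 : ℝ) / 2 - r / 2 ≠ 0 := by
      simpa using fun h => hr (by linarith)
    have h := ((hF0.div_const 2).sub (tendsto_const_nhds (x := r / 2))).div
      ((hG0.div_const 2).sub (tendsto_const_nhds (x := r / 2))) hden
    have hr2 : r / 2 ≠ 0 := div_ne_zero hr two_ne_zero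
    simpa [Pi.div_def, div_self hr2, div_self hden] using h
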